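/- Let f: ℝ → ℝ be continuous and define F(s) = s·f(s) - ∫₀ˢ f(σ) dσ. Let t₀ < t₁ and let g ∈ C([t₀,t₁], ℝ) be such that f ∘ g is continuously differentiable on [t₀,t₁]. Then F(g(t₁)) - F(g(t₀)) = ∫_{t₀}^{t₁} g(t) · (d/dt)(f(g(t))) dt. -/

import Mathlib

open MeasureTheory intervalIntegral Set Topology Filter

theorem stmt1 (f : ℝ → ℝ) (hf_cont : Continuous f)
    (F : ℝ → ℝ) (hF : ∀ s, F s = s * f s - ∫ σ in (0:ℝ)..s, f σ)
    (t₀ t₁ : ℝ) (ht : t₀ < t₁)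
    (g : ℝ → ℝ) (hg_cont : ContinuousOn g (Icc t₀ t₁))
    (h : ℝ → ℝ) (hh_cont : ContinuousOn h (Icc t₀ t₁))
    (hderiv : ∀ t ∈ Icc t₀ t₁, HasDerivWithinAt (f ∘ g) (h t) (Icc t₀ t₁) t) :
    F (g t₁) - F (g t₀) = ∫ t in t₀..t₁, g t * h t := by
  set u : ℝ → ℝ := f ∘ g with hu
  -- a bound on h
  obtain ⟨C, hC⟩ := isCompact_Icc.exists_bound_of_continuousOn hh_cont
  set M : ℝ := max C 0 with hMdef
  have hM0 : 0 ≤ M := le_max_right _ _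
  have hM : ∀ x ∈ Icc t₀ t₁, |h x| ≤ M := fun x hx =>
    (hC x hx).trans (le_max_left _ _)
  -- u is M-Lipschitz on Icc
  have hu_lip : ∀ x ∈ Icc t₀ t₁, ∀ y ∈ Icc t₀ t₁, |u y - u x| ≤ M * |y - x| := by
    intro x hx y hy
    exact Convex.norm_image_sub_le_of_norm_hasDerivWithin_le hderiv hM (convex_Icc t₀ t₁) hx hy
  -- the key derivative computation
  have key : ∀ t ∈ Icc t₀ t₁,
      HasDerivWithinAt (fun τ => F (g τ)) (g t * h t) (Icc t₀ t₁) t := by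
    intro t htI
    rw [hasDerivWithinAt_iff_tendsto_slope]
    set l := 𝓝[Icc t₀ t₁ \ {t}] t with hl
    have hsub : Icc t₀ t₁ \ {t} ⊆ Icc t₀ t₁ := diff_subset
    -- g tends to g t
    have hg_t : Filter.Tendsto g l (𝓝 (g t)) :=
      ((hg_cont t htI).mono hsub).tendsto
    -- slope of u tends to h t
    have hu_slope : Filter.Tendsto (slope u t) l (𝓝 (h t)) :=
      hasDerivWithinAt_iff_tendsto_slope.mp (hderiv t htI)
    -- the remainder term
    set R : ℝ → ℝ := fun t' => ∫ σ in (g t)..(g t'), (f σ - u t) with hR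
    have hRbound : ∀ t' ∈ Icc t₀ t₁ \ {t}, |R t' / (t' - t)| ≤ M * |g t' - g t| := by
      intro t' ht'
      have ht'I : t' ∈ Icc t₀ t₁ := ht'.1
      have htne : t' - t ≠ 0 := sub_ne_zero.2 ht'.2
      have huIcc : uIcc t t' ⊆ Icc t₀ t₁ := uIcc_subset_Icc htI ht'I
      have hbound : ∀ σ ∈ Set.uIoc (g t) (g t'), ‖f σ - u t‖ ≤ M * |t' - t| := by
        intro σ hσ
        have hσ' : σ ∈ uIcc (g t) (g t') := uIoc_subset_uIcc hσ
        have : σ ∈ g '' (uIcc t t') :=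
          intermediate_value_uIcc (hg_cont.mono huIcc) hσ'
        obtain ⟨τ, hτ, rfl⟩ := this
        have h1 : |u τ - u t| ≤ M * |τ - t| := hu_lip t htI τ (huIcc hτ)
        have h2 : |τ - t| ≤ |t' - t| := by
          rcases Set.mem_uIcc.mp hτ with ⟨h3, h4⟩ | ⟨h3, h4⟩
          · rw [abs_of_nonneg (by linarith : (0:ℝ) ≤ τ - t),
              abs_of_nonneg (by linarith : (0:ℝ) ≤ t' - t)]; linarith
          · rw [abs_of_nonpos (by linarith : τ - t ≤ (0:ℝ)),
              abs_of_nonpos (by linarith : t' - t ≤ (0:ℝ))]; linarith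
        calc |f (g τ) - u t| = |u τ - u t| := rfl
          _ ≤ M * |τ - t| := h1
          _ ≤ M * |t' - t| := by nlinarith
      have hRle : |R t'| ≤ (M * |t' - t|) * |g t' - g t| := by
        have := intervalIntegral.norm_integral_le_of_norm_le_const hbound
        simpa [hR, Real.norm_eq_abs, abs_sub_comm (g t') (g t)] using this
      rw [abs_div]
      rw [div_le_iff₀ (abs_pos.2 htne)]
      calc |R t'| ≤ (M * |t' - t|) * |g t' - g t| := hRle
        _ = M * |g t' - g t| * |t' - t| := by ring
    have hRtendsto : Filter.Tendsto (fun t' => R t' / (t' - t)) l (𝓝 0) := by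
      have hb : Filter.Tendsto (fun t' => M * |g t' - g t|) l (𝓝 0) := by
        have : Filter.Tendsto (fun t' => |g t' - g t|) l (𝓝 0) := by
          have := (hg_t.sub_const (g t)).abs
          simpa using this
        simpa using (this.const_mul M)
      refine squeeze_zero_norm' ?_ hb
      filter_upwards [self_mem_nhdsWithin] with t' ht' using hRbound t' ht'
    -- the slope identity
    have hEq : ∀ t' ∈ Icc t₀ t₁ \ {t},
        slope (fun τ => F (g τ)) t t' = g t' * slope u t t' - R t' / (t' - t) := by
      intro t' ht'
      have htne : t' - t ≠ 0 := sub_ne_zero.2 ht'.2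
      have hint1 : IntervalIntegrable f volume 0 (g t') := hf_cont.intervalIntegrable _ _
      have hint2 : IntervalIntegrable f volume 0 (g t) := hf_cont.intervalIntegrable _ _
      have hsplit : (∫ σ in (0:ℝ)..(g t'), f σ) - (∫ σ in (0:ℝ)..(g t), f σ)
          = ∫ σ in (g t)..(g t'), f σ :=
        intervalIntegral.integral_interval_sub_left hint1 hint2
      have hconst : (∫ σ in (g t)..(g t'), f σ)
          = R t' + (g t' - g t) * u t := by
        have hfi : IntervalIntegrable f volume (g t) (g t') := hf_cont.intervalIntegrable _ _
        have hci : IntervalIntegrable (fun _ : ℝ => u t) volume (g t) (g t') :=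
          intervalIntegrable_const
        have : (∫ σ in (g t)..(g t'), (f σ - u t))
            = (∫ σ in (g t)..(g t'), f σ) - ∫ σ in (g t)..(g t'), (u t : ℝ) :=
          intervalIntegral.integral_sub hfi hci
        rw [intervalIntegral.integral_const] at this
        simp only [hR, smul_eq_mul] at this ⊢
        linarith
      have hD : F (g t') - F (g t) = g t' * (u t' - u t) - R t' := by
        rw [hF (g t'), hF (g t)]
        have : g t' * f (g t') - g t * f (g t)
            - ((∫ σ in (0:ℝ)..(g t'), f σ) - (∫ σ in (0:ℝ)..(g t), f σ))
            = g t' * (u t' - u t) - R t' := by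
          rw [hsplit, hconst]
          simp only [hu, Function.comp_apply]
          ring
        linarith [this]
      rw [slope_def_field, slope_def_field, hD]
      field_simp
    have hlim : Filter.Tendsto (fun t' => g t' * slope u t t' - R t' / (t' - t)) l
        (𝓝 (g t * h t)) := by
      have := (hg_t.mul hu_slope).sub hRtendsto
      simpa using this
    refine hlim.congr' ?_
    filter_upwards [self_mem_nhdsWithin] with t' ht' using (hEq t' ht').symm
  -- now integrate
  have hcont : ContinuousOn (fun τ => F (g τ)) (Icc t₀ t₁) := fun x hx =>
    (key x hx).continuousWithinAt
  have hint : IntervalIntegrable (fun t => g t * h t) volume t₀ t₁ := by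
    apply ContinuousOn.intervalIntegrable
    rw [uIcc_of_le ht.le]
    exact hg_cont.mul hh_cont
  have := intervalIntegral.integral_eq_sub_of_hasDeriv_right_of_le ht.le hcont
    (fun x hx => (key x (Ioo_subset_Icc_self hx)).mono_of_mem_nhdsWithin
      (Icc_mem_nhdsGT_of_mem ⟨hx.1.le, hx.2⟩)) hint
  rw [this]
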